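/- arXiv:0902.0235 — 4 statements merged into one kernel-verified Lean document; each statement's English description precedes it below -/
import Mathlib

section
/- The function r ↦ 2(1+r)²(π − arccos(1/(1+r))) + 2(2r+r²)^{1/2} has the asymptotic expansion 2π + 4πr − (8√2/3)r^{3/2} + O(r²) as r → 0⁺. -/
open Real

lemma my_arcsin_lower {u : ℝ} (h0 : 0 ≤ u) (h1 : u ≤ 1/2) :
    u + u^3/6 ≤ Real.arcsin u := by
  have key : MonotoneOn (fun x : ℝ => Real.arcsin x - (x + x^3/6)) (Set.Icc 0 (1/2)) := by
    apply monotoneOn_of_deriv_nonneg (convex_Icc _ _)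
    · exact (Real.continuous_arcsin.sub (by continuity)).continuousOn
    · intro x hx
      rw [interior_Icc] at hx
      have hx1 : x ≠ -1 := by intro h; rw [h] at hx; norm_num at hx
      have hx2 : x ≠ 1 := by intro h; rw [h] at hx; norm_num at hx
      exact ((Real.hasDerivAt_arcsin hx1 hx2).sub
        (((hasDerivAt_id x).add ((hasDerivAt_pow 3 x).div_const 6)))).differentiableAt.differentiableWithinAt
    · intro x hx
      rw [interior_Icc] at hx
      obtain ⟨hxa, hxb⟩ := hx
      have hx1 : x ≠ -1 := by intro h; rw [h] at hxa; norm_num at hxa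
      have hx2 : x ≠ 1 := by intro h; rw [h] at hxb; norm_num at hxb
      have hd : HasDerivAt (fun x : ℝ => Real.arcsin x - (x + x^3/6))
          (1 / √(1 - x^2) - (1 + 3*x^2/6)) x := by
        have := (Real.hasDerivAt_arcsin hx1 hx2).sub
          (((hasDerivAt_id x).add ((hasDerivAt_pow 3 x).div_const 6)))
        exact this.congr_deriv (by norm_num)
      rw [hd.deriv]
      have hσ0 : (0:ℝ) < √(1 - x^2) := Real.sqrt_pos.2 (by nlinarith)
      have hσ2 : √(1 - x^2)^2 = 1 - x^2 := Real.sq_sqrt (by nlinarith)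
      have ha2 : ((1 + 3*x^2/6) * √(1 - x^2))^2 = (1 + 3*x^2/6)^2 * (1 - x^2) := by
        rw [mul_pow, hσ2]
      have hb : (1 + 3*x^2/6) * √(1 - x^2) ≤ 1 := by
        nlinarith [ha2, sq_nonneg x, sq_nonneg (x^2), sq_nonneg (x^3),
          mul_nonneg (show (0:ℝ) ≤ 1 + 3*x^2/6 by positivity) hσ0.le]
      have : 1 + 3*x^2/6 ≤ 1 / √(1 - x^2) := (le_div_iff₀ hσ0).2 hb
      linarith
  have h := key (Set.mem_Icc.2 ⟨le_refl 0, by norm_num⟩) (Set.mem_Icc.2 ⟨h0, h1⟩) h0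
  simp [Real.arcsin_zero] at h
  linarith

lemma my_arcsin_upper {u : ℝ} (h0 : 0 ≤ u) (h1 : u ≤ 1/2) :
    Real.arcsin u ≤ u + u^3/6 + u^5 := by
  have key : MonotoneOn (fun x : ℝ => (x + x^3/6 + x^5) - Real.arcsin x) (Set.Icc 0 (1/2)) := by
    apply monotoneOn_of_deriv_nonneg (convex_Icc _ _)
    · exact ((by continuity : Continuous fun x : ℝ => x + x^3/6 + x^5).sub Real.continuous_arcsin).continuousOn
    · intro x hx
      rw [interior_Icc] at hx
      have hx1 : x ≠ -1 := by intro h; rw [h] at hx; norm_num at hx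
      have hx2 : x ≠ 1 := by intro h; rw [h] at hx; norm_num at hx
      exact ((((hasDerivAt_id x).add ((hasDerivAt_pow 3 x).div_const 6)).add
        (hasDerivAt_pow 5 x)).sub (Real.hasDerivAt_arcsin hx1 hx2)).differentiableAt.differentiableWithinAt
    · intro x hx
      rw [interior_Icc] at hx
      obtain ⟨hxa, hxb⟩ := hx
      have hx1 : x ≠ -1 := by intro h; rw [h] at hxa; norm_num at hxa
      have hx2 : x ≠ 1 := by intro h; rw [h] at hxb; norm_num at hxb
      have hd : HasDerivAt (fun x : ℝ => (x + x^3/6 + x^5) - Real.arcsin x)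
          ((1 + 3*x^2/6 + 5*x^4) - 1 / √(1 - x^2)) x := by
        have := (((hasDerivAt_id x).add ((hasDerivAt_pow 3 x).div_const 6)).add
          (hasDerivAt_pow 5 x)).sub (Real.hasDerivAt_arcsin hx1 hx2)
        exact this.congr_deriv (by norm_num)
      rw [hd.deriv]
      have hσ0 : (0:ℝ) < √(1 - x^2) := Real.sqrt_pos.2 (by nlinarith)
      have hσ2 : √(1 - x^2)^2 = 1 - x^2 := Real.sq_sqrt (by nlinarith)
      have hx4 : x^2 ≤ 1/4 := by nlinarith
      have ha2 : ((1 + 3*x^2/6 + 5*x^4) * √(1 - x^2))^2 = (1 + 3*x^2/6 + 5*x^4)^2 * (1 - x^2) := by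
        rw [mul_pow, hσ2]
      have hb : 1 ≤ (1 + 3*x^2/6 + 5*x^4) * √(1 - x^2) := by
        nlinarith [ha2, hx4, sq_nonneg x, sq_nonneg (x^2), sq_nonneg (x^3),
          mul_nonneg (show (0:ℝ) ≤ 1 + 3*x^2/6 + 5*x^4 by positivity) hσ0.le,
          mul_nonneg (sq_nonneg x) (sub_nonneg.2 hx4),
          mul_nonneg (mul_nonneg (sq_nonneg x) (sq_nonneg x)) (sub_nonneg.2 hx4)]
      have : 1 / √(1 - x^2) ≤ 1 + 3*x^2/6 + 5*x^4 := (div_le_iff₀ hσ0).2 (by linarith)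
      linarith
  have h := key (Set.mem_Icc.2 ⟨le_refl 0, by norm_num⟩) (Set.mem_Icc.2 ⟨h0, h1⟩) h0
  simp [Real.arcsin_zero] at h
  linarith

open Filter Asymptotics

lemma aux_sle {s r : ℝ} (hs0 : 0 ≤ s) (h : s^2 = 2*r+r^2) (hr0 : 0 ≤ r) (hr : r ≤ 1/20) :
    s ≤ 1/2 := by nlinarith

lemma aux_sle1 {s r : ℝ} (hs0 : 0 ≤ s) (h : s^2 = 2*r+r^2) (hr0 : 0 ≤ r) : s ≤ 1+r := by
  nlinarith

lemma aux_sqb {w r : ℝ} (hw0 : 0 ≤ w) (h : w^2 = 2*r) (hr : 0 ≤ r) :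
    2*r + r^2 ≤ (r + w)^2 := by nlinarith

lemma aux_pi {x r : ℝ} (h : x ≤ 4) (hr2 : 0 ≤ r^2) : 2*x*r^2 ≤ 8*r^2 := by nlinarith

lemma aux_u2 {u s r : ℝ} (hus : u ≤ s) (hu0 : 0 ≤ u) (hs2 : s^2 = 2*r+r^2)
    (hr0 : 0 ≤ r) (hr : r ≤ 1/20) : u^2 ≤ 3*r := by nlinarith

lemma aux_u4 {u r : ℝ} (h : u^2 ≤ 3*r) (h0 : 0 ≤ u^2) : u^4 ≤ 9*r^2 := by nlinarith

lemma aux_two {r : ℝ} (h0 : 0 ≤ r) (h : r ≤ 1/20) : 2*(1+r)^2 ≤ 4 := by nlinarith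

open Filter Asymptotics

theorem tube_area_expansion :
    (fun r : ℝ =>
        (2 * (1 + r) ^ 2 * (π - arccos (1 / (1 + r))) + 2 * Real.sqrt (2 * r + r ^ 2))
          - (2 * π + 4 * π * r - (8 * Real.sqrt 2 / 3) * r ^ ((3 : ℝ) / 2)))
      =O[nhdsWithin 0 (Set.Ioi 0)] fun r : ℝ => r ^ 2 := by
  rw [Asymptotics.isBigO_iff]
  refine ⟨100, ?_⟩
  filter_upwards [Ioo_mem_nhdsGT_of_mem (by norm_num : (0:ℝ) ∈ Set.Ico 0 (1/20))] with r hr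
  obtain ⟨hr0, hr20⟩ := hr
  set t := Real.sqrt r with ht
  set s := Real.sqrt (2*r + r^2) with hs
  set c := Real.sqrt 2 with hc
  have h1r : (0:ℝ) < 1 + r := by linarith
  have ht2 : t^2 = r := Real.sq_sqrt hr0.le
  have ht0 : 0 ≤ t := Real.sqrt_nonneg _
  have hs2 : s^2 = 2*r + r^2 := Real.sq_sqrt (by positivity)
  have hs0 : 0 ≤ s := Real.sqrt_nonneg _
  have hc2 : c^2 = 2 := Real.sq_sqrt (by norm_num)
  have hc0 : 0 ≤ c := Real.sqrt_nonneg _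
  have hrpow : r ^ ((3:ℝ)/2) = r * t := by
    rw [show (3:ℝ)/2 = 1 + 1/2 by norm_num, Real.rpow_add hr0, Real.rpow_one, ht,
      Real.sqrt_eq_rpow]
  set u := s / (1+r) with hu
  have harc : Real.arccos (1/(1+r)) = Real.arcsin u := by
    rw [Real.arccos_eq_arcsin (by positivity)]
    congr 1
    rw [hu, hs, show 1 - (1/(1+r))^2 = (2*r+r^2)/(1+r)^2 by field_simp; ring,
      Real.sqrt_div (by positivity), Real.sqrt_sq h1r.le]
  have hsu : s = (1+r) * u := by rw [hu]; field_simp [h1r.ne']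
  have hu0 : 0 ≤ u := div_nonneg hs0 h1r.le
  have hus : u ≤ s := by rw [hu]; exact div_le_self hs0 (by linarith)
  have hule : u ≤ 1/2 := le_trans hus (aux_sle hs0 hs2 hr0.le hr20.le)
  have hAl := my_arcsin_lower hu0 hule
  have hAu := my_arcsin_upper hu0 hule
  set A := Real.arcsin u with hA
  -- w := c * t = sqrt (2r)
  have hw : c * t = Real.sqrt (2*r) := by rw [hc, ht, ← Real.sqrt_mul (by norm_num : (0:ℝ) ≤ 2)]
  have hws : c * t ≤ s := by
    rw [hw, hs]; exact Real.sqrt_le_sqrt (by nlinarith [sq_nonneg r])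
  have hsr : s ≤ r + c * t := by
    rw [hw, hs]
    calc Real.sqrt (2*r + r^2) ≤ Real.sqrt ((r + Real.sqrt (2*r))^2) :=
          Real.sqrt_le_sqrt (aux_sqb (Real.sqrt_nonneg _) (Real.sq_sqrt (by linarith)) hr0.le)
      _ = r + Real.sqrt (2*r) := Real.sqrt_sq (by positivity)
  -- rewrite the goal
  rw [harc, hrpow, Real.norm_eq_abs, Real.norm_eq_abs, abs_of_nonneg (sq_nonneg r)]
  have hX : 2 * (1 + r) ^ 2 * (π - A) + 2 * s - (2 * π + 4 * π * r - 8 * c / 3 * (r * t))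
      = 2*π*r^2 - 2*(1+r)^2*(A - u - u^3/6) - 2*r*(s - c*t) - (2*r/3)*(u - c*t) - (r^2/3)*u := by
    linear_combination (2*(1+r) + u/3*(s+(1+r)*u)) * hsu + (-(u/3)) * hs2
  rw [hX]
  -- individual term bounds
  have hpi : π ≤ 4 := Real.pi_le_four
  have hpi0 : 0 < π := Real.pi_pos
  have hr2 : (0:ℝ) ≤ r^2 := sq_nonneg r
  have hP1 : 0 ≤ 2*π*r^2 := by positivity
  have hP2 : 2*π*r^2 ≤ 8*r^2 := aux_pi hpi hr2
  have hu2 : u^2 ≤ 3*r := aux_u2 hus hu0 hs2 hr0.le hr20.le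
  have hu40 : (0:ℝ) ≤ u^4 := by positivity
  have hu4 : u^4 ≤ 9*r^2 := aux_u4 hu2 (sq_nonneg u)
  have hu5' : u^5 ≤ u^4 * (1/2) := by
    calc u^5 = u^4 * u := by ring
      _ ≤ u^4 * (1/2) := mul_le_mul_of_nonneg_left hule hu40
  have hu5 : u^5 ≤ 5*r^2 := by linarith
  have hE0 : 0 ≤ A - u - u^3/6 := by linarith
  have hE1 : A - u - u^3/6 ≤ u^5 := by linarith
  have hT2 : 2*(1+r)^2*(A - u - u^3/6) ≤ 20*r^2 := by
    calc 2*(1+r)^2*(A - u - u^3/6) ≤ 4 * (5*r^2) :=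
          mul_le_mul (aux_two hr0.le hr20.le) (by linarith) (by linarith) (by norm_num)
      _ = 20*r^2 := by ring
  have hT2' : 0 ≤ 2*(1+r)^2*(A - u - u^3/6) := by positivity
  have hT3 : 0 ≤ s - c*t := by linarith [hws]
  have hT3' : s - c*t ≤ r := by linarith [hsr]
  have hT3a : 0 ≤ 2*r*(s - c*t) := by positivity
  have hT3b : 2*r*(s - c*t) ≤ 2*r*r := mul_le_mul_of_nonneg_left hT3' (by linarith)
  have hsle1 : s ≤ 1 + r := aux_sle1 hs0 hs2 hr0.le
  have hsu' : 0 ≤ s - u := by linarith [hus]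
  have hsu'' : s - u ≤ r := by
    have h2 : s - u = s * r / (1+r) := by rw [hu]; field_simp; ring
    rw [h2, div_le_iff₀ h1r]
    calc s * r ≤ (1+r) * r := mul_le_mul_of_nonneg_right hsle1 hr0.le
      _ = r * (1+r) := by ring
  have huct1 : -r ≤ u - c*t := by linarith
  have huct2 : u - c*t ≤ r := by linarith
  have hT4a : (2*r/3)*(-r) ≤ (2*r/3)*(u - c*t) := mul_le_mul_of_nonneg_left huct1 (by positivity)
  have hT4b : (2*r/3)*(u - c*t) ≤ (2*r/3)*r := mul_le_mul_of_nonneg_left huct2 (by positivity)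
  have hT5a : 0 ≤ (r^2/3)*u := by positivity
  have hT5b : (r^2/3)*u ≤ (r^2/3)*(1/2) := mul_le_mul_of_nonneg_left hule (by positivity)
  rw [abs_le]
  constructor <;> linarith
end

section
/- Let M and M' be compact convex subsets of ℝ³ with nonempty interiors and with dim(M ∩ M') = 3 (i.e., M ∩ M' has nonempty interior). Then the boundary of M ∪ M' decomposes as the disjoint union of (bd M) \ M', (bd M') \ M, and (bd M ∩ bd M') \ int(M ∪ M'); in particular bd M ∩ bd M' ∩ int(M ∪ M') = ∅. -/
/-- If a continuous linear functional is `< c` on the interior of a convex set with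
nonempty interior, then it is `≤ c` on the whole set. -/
lemma le_of_lt_on_interior {E : Type*} [NormedAddCommGroup E] [NormedSpace ℝ E]
    {M : Set E} (hMv : Convex ℝ M) (f : E →L[ℝ] ℝ) {c : ℝ}
    (hf : ∀ a ∈ interior M, f a < c) {z : E} (hz : z ∈ interior M)
    {y : E} (hy : y ∈ M) : f y ≤ c := by
  by_contra h
  push_neg at h
  have hfz : f z < c := hf z hz
  set a : ℝ := (f y - c) / (2 * (f y - f z)) with ha
  have hd : 0 < f y - f z := by linarith
  have ha0 : 0 < a := div_pos (by linarith) (by linarith)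
  have ha1 : a < 1 := by
    rw [ha, div_lt_one (by positivity)]; linarith
  have hp : a • z + (1 - a) • y ∈ interior M :=
    hMv.combo_interior_closure_mem_interior hz (subset_closure hy) ha0 (by linarith)
      (by ring)
  have hval := hf _ hp
  simp only [map_add, map_smul, smul_eq_mul] at hval
  have : a * (f y - f z) = (f y - c) / 2 := by
    rw [ha]; field_simp
  nlinarith

/-- Key lemma: two boundary points cannot lie in the interior of the union. -/
lemma key_not_interior {M M' : Set (EuclideanSpace ℝ (Fin 3))}
    (hMc : IsClosed M) (hMv : Convex ℝ M)
    (hM'c : IsClosed M') (hM'v : Convex ℝ M')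
    (hdim : (interior (M ∩ M')).Nonempty)
    {x : EuclideanSpace ℝ (Fin 3)} (hx : x ∈ frontier M) (hx' : x ∈ frontier M') :
    x ∉ interior (M ∪ M') := by
  obtain ⟨z, hz⟩ := hdim
  have hzM : z ∈ interior M := interior_mono Set.inter_subset_left hz
  have hzM' : z ∈ interior M' := interior_mono Set.inter_subset_right hz
  have hxiM : x ∉ interior M := hx.2
  have hxiM' : x ∉ interior M' := hx'.2
  obtain ⟨f, hf⟩ := geometric_hahn_banach_open_point (hMv.interior) isOpen_interior hxiM
  obtain ⟨g, hg⟩ := geometric_hahn_banach_open_point (hM'v.interior) isOpen_interior hxiM'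
  have hfM : ∀ y ∈ M, f y ≤ f x := fun y hy => le_of_lt_on_interior hMv f hf hzM hy
  have hgM' : ∀ y ∈ M', g y ≤ g x := fun y hy => le_of_lt_on_interior hM'v g hg hzM' hy
  set v : EuclideanSpace ℝ (Fin 3) := x - z with hv
  have hfv : 0 < f v := by
    have := hf z hzM
    simp only [hv, map_sub]; linarith
  have hgv : 0 < g v := by
    have := hg z hzM'
    simp only [hv, map_sub]; linarith
  have hvne : v ≠ 0 := by
    intro h0
    rw [h0, map_zero] at hfv
    exact lt_irrefl _ hfv
  intro hxi
  obtain ⟨ε, hε, hball⟩ := Metric.isOpen_iff.mp isOpen_interior x hxi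
  set t : ℝ := ε / (2 * ‖v‖) with ht
  have hvnorm : 0 < ‖v‖ := norm_pos_iff.mpr hvne
  have ht0 : 0 < t := by positivity
  set p : EuclideanSpace ℝ (Fin 3) := x + t • v with hp
  have hpball : p ∈ Metric.ball x ε := by
    rw [Metric.mem_ball, hp, dist_eq_norm]
    have : x + t • v - x = t • v := by abel
    rw [this, norm_smul, Real.norm_of_nonneg ht0.le, ht]
    rw [div_mul_eq_mul_div, mul_comm]
    rw [div_lt_iff₀ (by positivity)]
    nlinarith
  have hpU : p ∈ M ∪ M' := interior_subset (hball hpball)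
  have hfp : f x < f p := by
    simp only [hp, map_add, map_smul, smul_eq_mul]
    nlinarith
  have hgp : g x < g p := by
    simp only [hp, map_add, map_smul, smul_eq_mul]
    nlinarith
  rcases hpU with h | h
  · exact absurd (hfM p h) (not_le.mpr hfp)
  · exact absurd (hgM' p h) (not_le.mpr hgp)

theorem frontier_union_partition_full_dim
    (M M' : Set (EuclideanSpace ℝ (Fin 3)))
    (hMc : IsCompact M) (hMv : Convex ℝ M) (hMi : (interior M).Nonempty)
    (hM'c : IsCompact M') (hM'v : Convex ℝ M') (hM'i : (interior M').Nonempty)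
    (hdim : (interior (M ∩ M')).Nonempty) :
    frontier (M ∪ M') =
        (frontier M \ M') ∪ (frontier M' \ M) ∪
          ((frontier M ∩ frontier M') \ interior (M ∪ M')) ∧
      Disjoint (frontier M \ M') (frontier M' \ M) ∧
      Disjoint (frontier M \ M') ((frontier M ∩ frontier M') \ interior (M ∪ M')) ∧
      Disjoint (frontier M' \ M) ((frontier M ∩ frontier M') \ interior (M ∪ M')) ∧
      frontier M ∩ frontier M' ∩ interior (M ∪ M') = ∅ := by
  have hMcl : IsClosed M := hMc.isClosed
  have hM'cl : IsClosed M' := hM'c.isClosed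
  have hUcl : IsClosed (M ∪ M') := hMcl.union hM'cl
  have hkey : ∀ x, x ∈ frontier M → x ∈ frontier M' → x ∉ interior (M ∪ M') :=
    fun x hx hx' => key_not_interior hMcl hMv hM'cl hM'v hdim hx hx'
  have hfM_sub : frontier M ⊆ M := hMcl.frontier_subset
  have hfM'_sub : frontier M' ⊆ M' := hM'cl.frontier_subset
  refine ⟨?_, ?_, ?_, ?_, ?_⟩
  · ext x
    constructor
    · rintro ⟨hxc, hxi⟩
      have hxU : x ∈ M ∪ M' := hUcl.closure_eq ▸ hxc
      rcases hxU with hxM | hxM'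
      · have hxfM : x ∈ frontier M :=
          ⟨subset_closure hxM, fun h => hxi (interior_mono Set.subset_union_left h)⟩
        by_cases hM' : x ∈ M'
        · have hxfM' : x ∈ frontier M' :=
            ⟨subset_closure hM', fun h => hxi (interior_mono Set.subset_union_right h)⟩
          exact Or.inr ⟨⟨hxfM, hxfM'⟩, hxi⟩
        · exact Or.inl (Or.inl ⟨hxfM, hM'⟩)
      · have hxfM' : x ∈ frontier M' :=
          ⟨subset_closure hxM', fun h => hxi (interior_mono Set.subset_union_right h)⟩
        by_cases hM : x ∈ M
        · have hxfM : x ∈ frontier M :=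
            ⟨subset_closure hM, fun h => hxi (interior_mono Set.subset_union_left h)⟩
          exact Or.inr ⟨⟨hxfM, hxfM'⟩, hxi⟩
        · exact Or.inl (Or.inr ⟨hxfM', hM⟩)
    · rintro ((⟨hxf, hxM'⟩ | ⟨hxf, hxM⟩) | ⟨⟨hxf, hxf'⟩, hxi⟩)
      · refine ⟨subset_closure (Or.inl (hfM_sub hxf)), fun hxi => ?_⟩
        have : x ∈ interior M := by
          rw [mem_interior_iff_mem_nhds] at hxi ⊢
          have h1 : (M'ᶜ : Set _) ∈ nhds x := hM'cl.isOpen_compl.mem_nhds hxM'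
          filter_upwards [hxi, h1] with y hy hy'
          rcases hy with h | h
          · exact h
          · exact absurd h hy'
        exact hxf.2 this
      · refine ⟨subset_closure (Or.inr (hfM'_sub hxf)), fun hxi => ?_⟩
        have : x ∈ interior M' := by
          rw [mem_interior_iff_mem_nhds] at hxi ⊢
          have h1 : (Mᶜ : Set _) ∈ nhds x := hMcl.isOpen_compl.mem_nhds hxM
          filter_upwards [hxi, h1] with y hy hy'
          rcases hy with h | h
          · exact absurd h hy'
          · exact h
        exact hxf.2 this
      · exact ⟨subset_closure (Or.inl (hfM_sub hxf)), hxi⟩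
  · rw [Set.disjoint_left]
    rintro x ⟨_, hxM'⟩ ⟨hxf', _⟩
    exact hxM' (hfM'_sub hxf')
  · rw [Set.disjoint_left]
    rintro x ⟨_, hxM'⟩ ⟨⟨_, hxf'⟩, _⟩
    exact hxM' (hfM'_sub hxf')
  · rw [Set.disjoint_left]
    rintro x ⟨_, hxM⟩ ⟨⟨hxf, _⟩, _⟩
    exact hxM (hfM_sub hxf)
  · ext x
    simp only [Set.mem_inter_iff, Set.mem_empty_iff_false, iff_false]
    rintro ⟨⟨hxf, hxf'⟩, hxi⟩
    exact hkey x hxf hxf' hxi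
end

section
/- Let M and M' be compact convex subsets of ℝⁿ with nonempty interiors such that M ∩ M' has empty interior. Then M ∩ M' = bd M ∩ bd M', and bd M ∩ int(M ∪ M') = bd M' ∩ int(M ∪ M'). -/
theorem inter_eq_frontier_inter_of_empty_interior (n : ℕ)
    (M M' : Set (EuclideanSpace ℝ (Fin n)))
    (hMc : IsCompact M) (hMv : Convex ℝ M) (hMi : (interior M).Nonempty)
    (hM'c : IsCompact M') (hM'v : Convex ℝ M') (hM'i : (interior M').Nonempty)
    (hdim : interior (M ∩ M') = ∅) :
    M ∩ M' = frontier M ∩ frontier M' ∧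
      frontier M ∩ interior (M ∪ M') = frontier M' ∩ interior (M ∪ M') := by
  rw [interior_inter] at hdim
  have hMcl : IsClosed M := hMc.isClosed
  have hM'cl : IsClosed M' := hM'c.isClosed
  -- key: interior A ∩ B = ∅ when interiors are disjoint
  have key : ∀ (A B : Set (EuclideanSpace ℝ (Fin n))), Convex ℝ B →
      (interior B).Nonempty → interior A ∩ interior B = ∅ →
      ∀ x, x ∈ interior A → x ∉ B := by
    intro A B hB hBi hd x hxA hxB
    obtain ⟨y, hy⟩ := hBi
    obtain ⟨ε, hε, hball⟩ := Metric.isOpen_iff.1 isOpen_interior x hxA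
    obtain ⟨t, ht0, ht1, htd⟩ : ∃ t : ℝ, 0 < t ∧ t < 1 ∧ t * dist y x < ε := by
      rcases eq_or_lt_of_le (dist_nonneg (x := y) (y := x)) with h | h
      · exact ⟨1/2, by norm_num, by norm_num, by simp [← h, hε]⟩
      · refine ⟨min (1/2) (ε / (2 * dist y x)), lt_min (by norm_num) (by positivity),
          lt_of_le_of_lt (min_le_left _ _) (by norm_num), ?_⟩
        calc min (1/2) (ε / (2 * dist y x)) * dist y x
            ≤ (ε / (2 * dist y x)) * dist y x := by
              exact mul_le_mul_of_nonneg_right (min_le_right _ _) dist_nonneg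
          _ = ε / 2 := by field_simp
          _ < ε := by linarith
    set z := t • y + (1 - t) • x with hz
    have hzB : z ∈ interior B :=
      hB.combo_interior_closure_mem_interior hy (subset_closure hxB) ht0 (by linarith)
        (by ring)
    have hzA : z ∈ interior A := by
      apply hball
      have : z - x = t • (y - x) := by
        simp only [hz, smul_sub, sub_smul, one_smul]
        abel
      simp only [Metric.mem_ball, dist_eq_norm, this, norm_smul, Real.norm_eq_abs,
        abs_of_pos ht0]
      calc t * ‖y - x‖ = t * dist y x := by rw [dist_eq_norm]
        _ < ε := htd
    have : z ∈ interior A ∩ interior B := ⟨hzA, hzB⟩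
    rw [hd] at this
    exact this
  have h1 : M ∩ M' = frontier M ∩ frontier M' := by
    apply Set.Subset.antisymm
    · rintro x ⟨hx, hx'⟩
      constructor
      · rw [hMcl.frontier_eq]
        exact ⟨hx, fun h => key M M' hM'v hM'i hdim x h hx'⟩
      · rw [hM'cl.frontier_eq]
        refine ⟨hx', fun h => key M' M hMv hMi ?_ x h hx⟩
        rw [Set.inter_comm]; exact hdim
    · rintro x ⟨hx, hx'⟩
      exact ⟨hMcl.frontier_subset hx, hM'cl.frontier_subset hx'⟩
  refine ⟨h1, ?_⟩
  have h2 : ∀ (A B : Set (EuclideanSpace ℝ (Fin n))), IsClosed A → IsClosed B →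
      (A ∩ B = frontier A ∩ frontier B) →
      ∀ x, x ∈ frontier A → x ∈ interior (A ∪ B) → x ∈ frontier B := by
    intro A B hAcl hBcl hAB x hxA hxU
    have hxB : x ∈ B := by
      rw [← hBcl.closure_eq]
      rw [frontier_eq_closure_inter_closure] at hxA
      rw [mem_closure_iff]
      intro o ho hxo
      have hxc := hxA.2
      rw [mem_closure_iff] at hxc
      obtain ⟨w, ⟨hwo, hwU⟩, hwA⟩ := hxc (o ∩ interior (A ∪ B))
        (ho.inter isOpen_interior) ⟨hxo, hxU⟩
      have : w ∈ A ∪ B := interior_subset hwU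
      rcases this with h | h
      · exact absurd h hwA
      · exact ⟨w, hwo, h⟩
    have hxA' : x ∈ A := hAcl.frontier_subset hxA
    have : x ∈ frontier A ∩ frontier B := hAB ▸ ⟨hxA', hxB⟩
    exact this.2
  apply Set.Subset.antisymm
  · rintro x ⟨hx, hxU⟩
    exact ⟨h2 M M' hMcl hM'cl h1 x hx hxU, hxU⟩
  · rintro x ⟨hx, hxU⟩
    refine ⟨h2 M' M hM'cl hMcl ?_ x hx (by rwa [Set.union_comm]), hxU⟩
    rw [Set.inter_comm, Set.inter_comm (frontier M')]
    exact h1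
end

section
/- Let φ, ψ : [0,1] → ℝ₊ be strictly convex C² functions with φ(0) = ψ(0) = 0, φ(1) = ψ(1) = 1, and φ(t)/φ'(t) < ψ(t)/ψ'(t) for all t ∈ (0,1]. Then for every t ∈ (0,1] there is a unique θ(t) ∈ (0, t) satisfying θ(t) − φ(θ(t))/φ'(θ(t)) = t − ψ(t)/ψ'(t), and the resulting function θ : [0,1] → [0,1] (with θ(0) = 0) is continuous. -/
open Set

lemma convex_facts (φ φ' : ℝ → ℝ)
    (hconv : StrictConvexOn ℝ (Icc 0 1) φ)
    (hder : ∀ t ∈ Icc (0:ℝ) 1, HasDerivAt φ (φ' t) t)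
    (hpos : ∀ t ∈ Icc (0:ℝ) 1, 0 ≤ φ t) (h0 : φ 0 = 0) :
    (∀ t ∈ Ioc (0:ℝ) 1, 0 < φ t ∧ 0 < φ' t ∧ φ t / φ' t < t) ∧
    StrictMonoOn (fun s => s - φ s / φ' s) (Ioc 0 1) := by
  have hmem : ∀ t ∈ Ioc (0:ℝ) 1, t ∈ Icc (0:ℝ) 1 := fun t ht => Ioc_subset_Icc_self ht
  have h0mem : (0:ℝ) ∈ Icc (0:ℝ) 1 := by constructor <;> norm_num
  have hφpos : ∀ t ∈ Ioc (0:ℝ) 1, 0 < φ t := by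
    intro t ht
    rcases (hpos t (hmem t ht)).lt_or_eq with h | h
    · exact h
    exfalso
    have hhalf : φ ((1/2 : ℝ) • (0:ℝ) + (1/2 : ℝ) • t) <
        (1/2 : ℝ) • φ 0 + (1/2 : ℝ) • φ t :=
      hconv.2 h0mem (hmem t ht) (by exact ne_of_lt ht.1) (by norm_num) (by norm_num) (by norm_num)
    have hmemhalf : (1/2 : ℝ) • (0:ℝ) + (1/2 : ℝ) • t ∈ Icc (0:ℝ) 1 := by
      simp only [smul_eq_mul]
      constructor <;> nlinarith [ht.1, ht.2]
    have := hpos _ hmemhalf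
    rw [h0, ← h] at hhalf
    simp only [smul_eq_mul] at hhalf this
    linarith
  have hslope : ∀ t ∈ Ioc (0:ℝ) 1, φ t / t < φ' t := by
    intro t ht
    have := hconv.slope_lt_of_hasDerivAt h0mem (hmem t ht) ht.1 (hder t (hmem t ht))
    rw [slope_def_field] at this
    rw [h0, sub_zero, sub_zero] at this
    exact this
  have hφ'pos : ∀ t ∈ Ioc (0:ℝ) 1, 0 < φ' t := by
    intro t ht
    exact lt_trans (div_pos (hφpos t ht) ht.1) (hslope t ht)
  refine ⟨fun t ht => ⟨hφpos t ht, hφ'pos t ht, ?_⟩, ?_⟩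
  · rw [div_lt_iff₀ (hφ'pos t ht)]
    have := hslope t ht
    rw [div_lt_iff₀ ht.1] at this
    nlinarith
  · intro s hs u hu hsu
    have hφ's := hφ'pos s hs
    have hφ'u := hφ'pos u hu
    have hφs := hφpos s hs
    have h1 : φ' s < φ' u :=
      lt_trans (hconv.lt_slope_of_hasDerivAt (hmem s hs) (hmem u hu) hsu (hder s (hmem s hs)))
        (hconv.slope_lt_of_hasDerivAt (hmem s hs) (hmem u hu) hsu (hder u (hmem u hu)))
    have h2 : φ u - φ s < φ' u * (u - s) := by
      have := hconv.slope_lt_of_hasDerivAt (hmem s hs) (hmem u hu) hsu (hder u (hmem u hu))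
      rw [slope_def_field] at this
      rw [div_lt_iff₀ (by linarith : (0:ℝ) < u - s)] at this
      linarith
    have ha : φ s / φ' s * φ' s = φ s := div_mul_cancel₀ _ (ne_of_gt hφ's)
    have hb : φ u / φ' u * φ' u = φ u := div_mul_cancel₀ _ (ne_of_gt hφ'u)
    have hapos : 0 < φ s / φ' s := div_pos hφs hφ's
    simp only
    nlinarith [mul_lt_mul_of_pos_left h1 hapos]

theorem theta_exists_unique_continuous
    (φ ψ φ' ψ' : ℝ → ℝ)
    (hφconv : StrictConvexOn ℝ (Icc 0 1) φ) (hψconv : StrictConvexOn ℝ (Icc 0 1) ψ)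
    (hφder : ∀ t ∈ Icc (0:ℝ) 1, HasDerivAt φ (φ' t) t)
    (hψder : ∀ t ∈ Icc (0:ℝ) 1, HasDerivAt ψ (ψ' t) t)
    (hφ'C1 : ContDiffOn ℝ 1 φ' (Icc 0 1)) (hψ'C1 : ContDiffOn ℝ 1 ψ' (Icc 0 1))
    (hφpos : ∀ t ∈ Icc (0:ℝ) 1, 0 ≤ φ t) (hψpos : ∀ t ∈ Icc (0:ℝ) 1, 0 ≤ ψ t)
    (hφ0 : φ 0 = 0) (hψ0 : ψ 0 = 0) (hφ1 : φ 1 = 1) (hψ1 : ψ 1 = 1)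
    (hratio : ∀ t ∈ Ioc (0:ℝ) 1, φ t / φ' t < ψ t / ψ' t) :
    ∃ θ : ℝ → ℝ, θ 0 = 0 ∧ ContinuousOn θ (Icc 0 1) ∧
      (∀ t ∈ Icc (0:ℝ) 1, θ t ∈ Icc 0 1) ∧
      ∀ t ∈ Ioc (0:ℝ) 1,
        (θ t ∈ Ioo 0 t ∧ θ t - φ (θ t) / φ' (θ t) = t - ψ t / ψ' t) ∧
        ∀ s ∈ Ioo (0:ℝ) t, s - φ s / φ' s = t - ψ t / ψ' t → s = θ t := by
  obtain ⟨hφfacts, hφmono⟩ := convex_facts φ φ' hφconv hφder hφpos hφ0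
  obtain ⟨hψfacts, -⟩ := convex_facts ψ ψ' hψconv hψder hψpos hψ0
  set F : ℝ → ℝ := fun s => s - φ s / φ' s with hFdef
  set G : ℝ → ℝ := fun t => t - ψ t / ψ' t with hGdef
  have hFcont : ContinuousOn F (Ioc 0 1) := by
    apply ContinuousOn.sub continuousOn_id
    exact ContinuousOn.div
      (fun x hx => ((hφder x (Ioc_subset_Icc_self hx)).continuousAt).continuousWithinAt)
      (hφ'C1.continuousOn.mono Ioc_subset_Icc_self)
      (fun x hx => (hφfacts x hx).2.1.ne')
  have hGcontAt : ∀ t₀ ∈ Ioc (0:ℝ) 1, ContinuousWithinAt G (Icc 0 1) t₀ := by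
    intro t₀ ht₀
    exact continuousWithinAt_id.sub
      (((hψder t₀ (Ioc_subset_Icc_self ht₀)).continuousAt.continuousWithinAt).div
        (hψ'C1.continuousOn t₀ (Ioc_subset_Icc_self ht₀)) (hψfacts t₀ ht₀).2.1.ne')
  have key : ∀ t ∈ Ioc (0:ℝ) 1, ∃! s, s ∈ Ioo (0:ℝ) t ∧ F s = G t := by
    intro t ht
    have hGt0 : 0 < G t := by
      have := (hψfacts t ht).2.2
      simp only [hGdef]; linarith
    have hGtF : G t < F t := by
      have := hratio t ht
      simp only [hGdef, hFdef]; linarith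
    have hFtt : F t < t := by
      have h := hφfacts t ht
      have : 0 < φ t / φ' t := div_pos h.1 h.2.1
      simp only [hFdef]; linarith
    have hat : G t < t := lt_trans hGtF hFtt
    have haIoc : G t ∈ Ioc (0:ℝ) 1 := ⟨hGt0, le_trans hat.le ht.2⟩
    have hFa : F (G t) < G t := by
      have h := hφfacts (G t) haIoc
      have : 0 < φ (G t) / φ' (G t) := div_pos h.1 h.2.1
      simp only [hFdef]; linarith
    have hsub : Icc (G t) t ⊆ Ioc (0:ℝ) 1 :=
      fun x hx => ⟨lt_of_lt_of_le hGt0 hx.1, le_trans hx.2 ht.2⟩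
    have hivt := intermediate_value_Icc hat.le (hFcont.mono hsub)
    obtain ⟨x, hx, hFx⟩ := hivt ⟨hFa.le, hGtF.le⟩
    have hxIoc : x ∈ Ioc (0:ℝ) 1 := hsub hx
    have hxltt : x < t := by
      rcases lt_or_eq_of_le hx.2 with h | h
      · exact h
      · exfalso; rw [h] at hFx; exact (ne_of_gt hGtF) hFx
    refine ⟨x, ⟨⟨hxIoc.1, hxltt⟩, hFx⟩, ?_⟩
    rintro y ⟨hy, hFy⟩
    have hyIoc : y ∈ Ioc (0:ℝ) 1 := ⟨hy.1, le_trans hy.2.le ht.2⟩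
    exact hφmono.injOn hyIoc hxIoc (by rw [hFy, hFx])
  classical
  set θ : ℝ → ℝ := fun t => if h : t ∈ Ioc (0:ℝ) 1 then (key t h).choose else 0 with hθdef
  have hspec : ∀ t (h : t ∈ Ioc (0:ℝ) 1), θ t ∈ Ioo (0:ℝ) t ∧ F (θ t) = G t := by
    intro t h
    simp only [hθdef, dif_pos h]
    exact (key t h).choose_spec.1
  have huniq : ∀ t (h : t ∈ Ioc (0:ℝ) 1) (s : ℝ), s ∈ Ioo (0:ℝ) t ∧ F s = G t → s = θ t := by
    intro t h s hs
    simp only [hθdef, dif_pos h]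
    exact (key t h).choose_spec.2 s hs
  have hθ0 : θ 0 = 0 := by
    simp only [hθdef, dif_neg (by simp : ¬ (0:ℝ) ∈ Ioc (0:ℝ) 1)]
  refine ⟨θ, hθ0, ?_, ?_, ?_⟩
  · -- continuity
    intro t₀ ht₀
    rcases eq_or_lt_of_le ht₀.1 with h0 | h0
    · -- t₀ = 0
      rw [← h0]
      have hbound : ∀ t ∈ Icc (0:ℝ) 1, θ t ∈ Icc 0 t := by
        intro t ht
        by_cases hp : t ∈ Ioc (0:ℝ) 1
        · exact ⟨(hspec t hp).1.1.le, (hspec t hp).1.2.le⟩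
        · have : t = 0 := le_antisymm (by
            by_contra hc
            exact hp ⟨lt_of_le_of_ne ht.1 (fun h => hc (h ▸ le_refl 0)), ht.2⟩) ht.1
          subst this
          simp [hθ0]
      rw [ContinuousWithinAt, hθ0]
      apply tendsto_of_tendsto_of_tendsto_of_le_of_le' tendsto_const_nhds
        (Filter.Tendsto.mono_left Filter.tendsto_id nhdsWithin_le_nhds)
      · filter_upwards [eventually_mem_nhdsWithin] with t ht
        exact (hbound t ht).1
      · filter_upwards [eventually_mem_nhdsWithin] with t ht
        exact (hbound t ht).2
    · -- 0 < t₀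
      have ht₀' : t₀ ∈ Ioc (0:ℝ) 1 := ⟨h0, ht₀.2⟩
      obtain ⟨hx₀mem, hx₀eq⟩ := hspec t₀ ht₀'
      rw [ContinuousWithinAt, Metric.tendsto_nhds]
      intro ε hε
      set x₀ := θ t₀ with hx₀def
      set δ := min ε (min (x₀ / 2) ((t₀ - x₀) / 2)) with hδdef
      have hδpos : 0 < δ :=
        lt_min hε (lt_min (by linarith [hx₀mem.1]) (by linarith [hx₀mem.2]))
      have hδε : δ ≤ ε := min_le_left _ _
      have hδ1 : δ ≤ x₀ / 2 := le_trans (min_le_right _ _) (min_le_left _ _)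
      have hδ2 : δ ≤ (t₀ - x₀) / 2 := le_trans (min_le_right _ _) (min_le_right _ _)
      have h1 : 0 < x₀ - δ := by linarith [hx₀mem.1]
      have h2 : x₀ + δ < t₀ := by linarith [hx₀mem.2]
      have hx₀Ioc : x₀ ∈ Ioc (0:ℝ) 1 := ⟨hx₀mem.1, le_trans hx₀mem.2.le ht₀'.2⟩
      have hm1 : x₀ - δ ∈ Ioc (0:ℝ) 1 := ⟨h1, by linarith [hx₀Ioc.2]⟩
      have hm2 : x₀ + δ ∈ Ioc (0:ℝ) 1 := ⟨by linarith [hx₀mem.1], by linarith [ht₀'.2]⟩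
      have hlow : F (x₀ - δ) < G t₀ := by
        rw [← hx₀eq]; exact hφmono hm1 hx₀Ioc (by linarith)
      have hhigh : G t₀ < F (x₀ + δ) := by
        rw [← hx₀eq]; exact hφmono hx₀Ioc hm2 (by linarith)
      have hev1 : ∀ᶠ t in nhdsWithin t₀ (Icc (0:ℝ) 1),
          G t ∈ Ioo (F (x₀ - δ)) (F (x₀ + δ)) :=
        (hGcontAt t₀ ht₀') (Ioo_mem_nhds hlow hhigh)
      have hev2 : ∀ᶠ t in nhdsWithin t₀ (Icc (0:ℝ) 1), 0 < t :=
        eventually_nhdsWithin_of_eventually_nhds (eventually_gt_nhds h0)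
      have hev3 : ∀ᶠ t in nhdsWithin t₀ (Icc (0:ℝ) 1), t ∈ Icc (0:ℝ) 1 :=
        eventually_mem_nhdsWithin
      filter_upwards [hev1, hev2, hev3] with t hG' hpos' hIcc'
      have htIoc : t ∈ Ioc (0:ℝ) 1 := ⟨hpos', hIcc'.2⟩
      obtain ⟨hmem', heq'⟩ := hspec t htIoc
      have hθIoc : θ t ∈ Ioc (0:ℝ) 1 := ⟨hmem'.1, le_trans hmem'.2.le hIcc'.2⟩
      have hltθ : x₀ - δ < θ t := by
        have hlt : F (x₀ - δ) < F (θ t) := by rw [heq']; exact hG'.1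
        exact (hφmono.lt_iff_lt hm1 hθIoc).1 hlt
      have hθlt : θ t < x₀ + δ := by
        have hlt : F (θ t) < F (x₀ + δ) := by rw [heq']; exact hG'.2
        exact (hφmono.lt_iff_lt hθIoc hm2).1 hlt
      rw [Real.dist_eq, abs_lt]
      constructor <;> [linarith; linarith]
  · intro t ht
    by_cases hp : t ∈ Ioc (0:ℝ) 1
    · exact ⟨(hspec t hp).1.1.le, le_trans (hspec t hp).1.2.le hp.2⟩
    · have : t = 0 := le_antisymm (by
        by_contra hc
        exact hp ⟨lt_of_le_of_ne ht.1 (fun h => hc (h ▸ le_refl 0)), ht.2⟩) ht.1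
      subst this
      simp [hθ0]
  · intro t ht
    obtain ⟨hmem', heq'⟩ := hspec t ht
    refine ⟨⟨hmem', heq'⟩, ?_⟩
    intro s hs heq
    exact huniq t ht s ⟨hs, heq⟩
end
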